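/- Let γ > 0, let y ∈ ℝ with y ≠ γ and y ≠ −γ, and let k ∈ ℤ. Then (1/π) · ∫_{−π/2}^{π/2} [sinh(2γ) / (sin(x + i(γ+y)) · sin(x − i(γ−y)))] · e^{−2ikx} dx = Σ_{σ ∈ {+1,−1}} 2 · sign(γ + σy) · H(k·(y + σγ)) · e^{−2k(y + σγ)}, where H(t) = 1 for t > 0, H(0) = 1/2, H(t) = 0 for t < 0 is the Heaviside function and sign(t) = t/|t| for t ≠ 0. -/

import Mathlib

open Complex MeasureTheory intervalIntegral Real

/-- The Heaviside function with the convention `H(0) = 1/2`. -/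
noncomputable def heaviside (t : ℝ) : ℝ := if 0 < t then 1 else if t = 0 then 1 / 2 else 0



lemma sin_shift_ne (x c : ℝ) (hc : c ≠ 0) : Complex.sin ((x:ℂ) + Complex.I * c) ≠ 0 := by
  rw [Complex.sin_ne_zero_iff]
  intro n h
  have := congrArg Complex.im h
  simp at this
  exact hc this

lemma int_exp (m : ℤ) :
    ∫ x in (-(Real.pi/2))..(Real.pi/2), Complex.exp (2 * Complex.I * m * x)
      = if m = 0 then (Real.pi : ℂ) else 0 := by
  rcases eq_or_ne m 0 with hm | hm
  · subst hm
    simp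
  · rw [if_neg hm]
    have hc : (2 * Complex.I * m : ℂ) ≠ 0 := by
      simp [Complex.I_ne_zero, Complex.ext_iff]
      exact_mod_cast hm
    rw [integral_exp_mul_complex hc]
    have : Complex.exp (2 * Complex.I * m * (Real.pi/2 : ℝ))
        = Complex.exp (2 * Complex.I * m * ((-(Real.pi/2) : ℝ))) := by
      rw [Complex.exp_eq_exp_iff_exists_int]
      exact ⟨m, by push_cast; ring⟩
    rw [this, sub_self, zero_div]

lemma cot_eq (z : ℂ) (hs : Complex.sin z ≠ 0) (hq1 : (1:ℂ) - Complex.exp (2*Complex.I*z) ≠ 0) :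
    Complex.cos z / Complex.sin z
      = -Complex.I - 2*Complex.I*(Complex.exp (2*Complex.I*z) * (1 - Complex.exp (2*Complex.I*z))⁻¹) := by
  have he : Complex.exp (2*Complex.I*z) = Complex.exp (z*Complex.I) ^ 2 := by
    rw [← Complex.exp_nat_mul]; ring_nf
  have hne := Complex.exp_ne_zero (z*Complex.I)
  have hneg : Complex.exp (-z*Complex.I) = (Complex.exp (z*Complex.I))⁻¹ := by
    rw [← Complex.exp_neg]; ring_nf
  rw [he] at hq1 ⊢
  simp only [Complex.cos, Complex.sin] at hs ⊢
  rw [hneg] at hs ⊢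
  set u := Complex.exp (z*Complex.I) with hu
  field_simp at hs
  field_simp
  ring_nf
  ring_nf at hs
  rw [Complex.I_sq]
  ring

lemma norm_q {c : ℝ} (hc : 0 < c) (x : ℝ) :
    ‖Complex.exp (2*Complex.I*((x:ℂ) + Complex.I*c))‖ = Real.exp (-2*c) := by
  rw [Complex.norm_exp]
  congr 1
  simp [Complex.mul_re, Complex.add_re, Complex.add_im]

lemma norm_q_lt {c : ℝ} (hc : 0 < c) (x : ℝ) :
    ‖Complex.exp (2*Complex.I*((x:ℂ) + Complex.I*c))‖ < 1 := by
  rw [norm_q hc]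
  rw [Real.exp_lt_one_iff]
  linarith

lemma cot_series {c : ℝ} (hc : 0 < c) (x : ℝ) (k : ℤ) :
    Complex.cos ((x:ℂ) + Complex.I*c) / Complex.sin ((x:ℂ) + Complex.I*c)
        * Complex.exp (-2*Complex.I*k*x)
      = -Complex.I * Complex.exp (-2*Complex.I*k*x)
        + ∑' n:ℕ, (-2*Complex.I) * Complex.exp (2*Complex.I*(n+1)*((x:ℂ) + Complex.I*c))
            * Complex.exp (-2*Complex.I*k*x) := by
  set z : ℂ := (x:ℂ) + Complex.I*c with hz
  set q : ℂ := Complex.exp (2*Complex.I*z) with hqdef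
  have hq : ‖q‖ < 1 := norm_q_lt hc x
  have hq1 : (1:ℂ) - q ≠ 0 := by
    intro h
    have : q = 1 := by linear_combination -h
    rw [this] at hq; simp at hq
  have hs : Complex.sin z ≠ 0 := sin_shift_ne x c (ne_of_gt hc)
  have hterm : ∀ n : ℕ, Complex.exp (2*Complex.I*(n+1)*z) = q^(n+1) := by
    intro n
    rw [hqdef, ← Complex.exp_nat_mul]
    push_cast
    ring_nf
  have hsum : (∑' n:ℕ, (-2*Complex.I) * Complex.exp (2*Complex.I*(n+1)*z)
      * Complex.exp (-2*Complex.I*k*x))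
      = -2*Complex.I * (q * (1-q)⁻¹) * Complex.exp (-2*Complex.I*k*x) := by
    calc (∑' n:ℕ, (-2*Complex.I) * Complex.exp (2*Complex.I*(n+1)*z)
        * Complex.exp (-2*Complex.I*k*x))
        = ∑' n:ℕ, ((-2*Complex.I) * q * Complex.exp (-2*Complex.I*k*x)) * q^n := by
          congr 1; funext n; rw [hterm n, pow_succ]; ring
      _ = ((-2*Complex.I) * q * Complex.exp (-2*Complex.I*k*x)) * (1-q)⁻¹ := by
          rw [tsum_mul_left, tsum_geometric_of_norm_lt_one hq]
      _ = -2*Complex.I * (q * (1-q)⁻¹) * Complex.exp (-2*Complex.I*k*x) := by ring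
  rw [hsum, cot_eq z hs hq1]
  ring


lemma exp_split (n : ℕ) (x c : ℝ) :
    Complex.exp (2*Complex.I*(n+1)*((x:ℂ) + Complex.I*c))
      = ((Real.exp (-2*(n+1)*c) : ℝ) : ℂ) * Complex.exp (2*Complex.I*(n+1)*(x:ℂ)) := by
  rw [Complex.ofReal_exp, ← Complex.exp_add]
  congr 1
  push_cast
  ring_nf
  simp [Complex.ext_iff]
  ring

lemma cont_cot {c : ℝ} (hc : c ≠ 0) (k : ℤ) :
    Continuous (fun x : ℝ => Complex.cos ((x:ℂ) + Complex.I*c) / Complex.sin ((x:ℂ) + Complex.I*c)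
      * Complex.exp (-2*Complex.I*k*x)) := by
  apply Continuous.mul
  · apply Continuous.div
    · fun_prop
    · fun_prop
    · exact fun x => sin_shift_ne x c hc
  · fun_prop

lemma int_f1 (k : ℤ) :
    (∫ x in (-(Real.pi/2))..(Real.pi/2), -Complex.I * Complex.exp (-2*Complex.I*k*x))
      = if k = 0 then (-Complex.I*Real.pi) else 0 := by
  rw [intervalIntegral.integral_const_mul]
  have : (∫ x in (-(Real.pi/2))..(Real.pi/2), Complex.exp (-2*Complex.I*k*x))
      = ∫ x in (-(Real.pi/2))..(Real.pi/2), Complex.exp (2*Complex.I*(-k:ℤ)*x) := by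
    apply intervalIntegral.integral_congr
    intro x _
    exact congrArg Complex.exp (by push_cast; ring)
  rw [this, int_exp (-k)]
  simp only [neg_eq_zero]
  split <;> ring

lemma int_Fn {c : ℝ} (hc : 0 < c) (k : ℤ) (n : ℕ) :
    (∫ x in (-(Real.pi/2))..(Real.pi/2),
        (-2*Complex.I) * Complex.exp (2*Complex.I*(n+1)*((x:ℂ) + Complex.I*c))
          * Complex.exp (-2*Complex.I*k*x))
      = if ((n:ℤ)+1 = k) then -2*Complex.I*((Real.exp (-2*(n+1)*c):ℝ):ℂ)*Real.pi else 0 := by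
  have : ∀ x : ℝ, (-2*Complex.I) * Complex.exp (2*Complex.I*(n+1)*((x:ℂ) + Complex.I*c))
          * Complex.exp (-2*Complex.I*k*x)
      = ((-2*Complex.I) * ((Real.exp (-2*(n+1)*c):ℝ):ℂ))
          * Complex.exp (2*Complex.I*(((n:ℤ)+1-k : ℤ):ℂ)*x) := by
    intro x
    rw [exp_split]
    rw [show ((2:ℂ)*Complex.I*(((n:ℤ)+1-k : ℤ):ℂ)*x) = 2*Complex.I*(n+1)*(x:ℂ) + -2*Complex.I*k*x by push_cast; ring]
    rw [Complex.exp_add]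
    ring
  rw [intervalIntegral.integral_congr (fun x _ => this x), intervalIntegral.integral_const_mul,
    int_exp ((n:ℤ)+1-k)]
  by_cases h : (n:ℤ)+1 = k
  · rw [if_pos (show (n:ℤ)+1-k = 0 by omega), if_pos h]
    try ring
  · rw [if_neg (show ¬((n:ℤ)+1-k = 0) by omega), if_neg h]
    try ring

lemma core_pos {c : ℝ} (hc : 0 < c) (k : ℤ) :
    (∫ x in (-(Real.pi/2))..(Real.pi/2),
        Complex.cos ((x:ℂ)+Complex.I*c)/Complex.sin ((x:ℂ)+Complex.I*c)
          * Complex.exp (-2*Complex.I*k*x))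
    = (if k = 0 then (-Complex.I*Real.pi) else 0)
      + (if 1 ≤ k then -2*Complex.I*Real.pi*((Real.exp (-2*k*c):ℝ):ℂ) else 0) := by
  have hab : -(Real.pi/2) ≤ Real.pi/2 := by linarith [Real.pi_pos]
  set F : ℕ → ℝ → ℂ := fun n x => (-2*Complex.I)
      * Complex.exp (2*Complex.I*(n+1)*((x:ℂ) + Complex.I*c))
      * Complex.exp (-2*Complex.I*k*x) with hF
  have hFcont : ∀ n, Continuous (F n) := by intro n; rw [hF]; fun_prop
  have hnorm : ∀ (n:ℕ) (x:ℝ), ‖F n x‖ = 2 * Real.exp (-2*(n+1)*c) := by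
    intro n x
    rw [hF]
    simp only
    rw [exp_split]
    simp [Complex.norm_exp, Complex.mul_im, abs_of_pos (Real.exp_pos _), Complex.mul_re]
  have hcont2 : Continuous (fun x : ℝ => ∑' n:ℕ, F n x) := by
    have : (fun x : ℝ => ∑' n:ℕ, F n x)
        = fun x : ℝ => (Complex.cos ((x:ℂ)+Complex.I*c)/Complex.sin ((x:ℂ)+Complex.I*c)
        * Complex.exp (-2*Complex.I*k*x)) - (-Complex.I * Complex.exp (-2*Complex.I*k*x)) := by
      funext x
      rw [cot_series hc x k, hF]
      ring
    rw [this]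
    exact ((cont_cot (ne_of_gt hc) k).sub (by fun_prop))
  have hgeom : ∀ n : ℕ, Real.exp (-2*((n:ℝ)+1)*c) = Real.exp (-2*c) * Real.exp (-2*c)^(n:ℕ) := by
    intro n
    rw [← Real.exp_nat_mul, ← Real.exp_add]
    congr 1
    push_cast
    ring
  have hsummable : Summable (fun n : ℕ => Real.pi * (2 * Real.exp (-2*((n:ℝ)+1)*c))) := by
    simp_rw [hgeom]
    apply Summable.mul_left
    apply Summable.mul_left
    apply Summable.mul_left
    exact summable_geometric_of_lt_one (Real.exp_nonneg _) (by
      rw [Real.exp_lt_one_iff]; linarith)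
  have hIoc : ∀ n : ℕ, (∫ x in Set.Ioc (-(Real.pi/2)) (Real.pi/2), ‖F n x‖)
      = Real.pi * (2 * Real.exp (-2*((n:ℝ)+1)*c)) := by
    intro n
    rw [setIntegral_congr_fun measurableSet_Ioc (fun x _ => hnorm n x)]
    rw [setIntegral_const, measureReal_def, Real.volume_Ioc, smul_eq_mul]
    rw [ENNReal.toReal_ofReal (by linarith)]
    ring_nf
  have hint : ∀ n : ℕ, Integrable (F n) (volume.restrict (Set.Ioc (-(Real.pi/2)) (Real.pi/2))) :=
    fun n => (hFcont n).integrableOn_Ioc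
  have interchange : (∫ x in Set.Ioc (-(Real.pi/2)) (Real.pi/2), ∑' n:ℕ, F n x)
      = ∑' n:ℕ, ∫ x in Set.Ioc (-(Real.pi/2)) (Real.pi/2), F n x := by
    refine (integral_tsum_of_summable_integral_norm hint ?_).symm
    apply Summable.congr hsummable
    intro n
    rw [hIoc n]
  have step1 : (∫ x in (-(Real.pi/2))..(Real.pi/2),
      Complex.cos ((x:ℂ)+Complex.I*c)/Complex.sin ((x:ℂ)+Complex.I*c)
        * Complex.exp (-2*Complex.I*k*x))
      = (∫ x in (-(Real.pi/2))..(Real.pi/2), -Complex.I * Complex.exp (-2*Complex.I*k*x))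
        + (∫ x in (-(Real.pi/2))..(Real.pi/2), ∑' n:ℕ, F n x) := by
    rw [← intervalIntegral.integral_add (Continuous.intervalIntegrable (by fun_prop) _ _)
      (hcont2.intervalIntegrable _ _)]
    apply intervalIntegral.integral_congr
    intro x _
    exact cot_series hc x k
  have int2 : (∫ x in (-(Real.pi/2))..(Real.pi/2), ∑' n:ℕ, F n x)
      = if 1 ≤ k then -2*Complex.I*Real.pi*((Real.exp (-2*k*c):ℝ):ℂ) else 0 := by
    rw [intervalIntegral.integral_of_le hab, interchange]
    have hFn : ∀ n : ℕ, (∫ x in Set.Ioc (-(Real.pi/2)) (Real.pi/2), F n x)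
        = if ((n:ℤ)+1 = k) then -2*Complex.I*((Real.exp (-2*(n+1)*c):ℝ):ℂ)*Real.pi else 0 := by
      intro n
      rw [← intervalIntegral.integral_of_le hab]
      exact int_Fn hc k n
    simp_rw [hFn]
    by_cases hk : 1 ≤ k
    · rw [if_pos hk]
      have hn₀ : ((k-1).toNat : ℤ) = k - 1 := Int.toNat_of_nonneg (by omega)
      rw [tsum_eq_single (k-1).toNat (by
        intro n hn
        rw [if_neg]
        omega)]
      rw [if_pos (by omega)]
      have : (-2:ℝ)*(((k-1).toNat : ℝ)+1)*c = -2*(k:ℝ)*c := by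
        have : (((k-1).toNat : ℝ)) = (k:ℝ) - 1 := by exact_mod_cast congrArg (Int.cast : ℤ → ℝ) hn₀
        rw [this]; ring
      rw [this]
      ring
    · rw [if_neg hk]
      convert tsum_zero with n
      rw [if_neg (by omega)]
  rw [step1, int_f1, int2]



lemma core_neg {c : ℝ} (hc : c < 0) (k : ℤ) :
    (∫ x in (-(Real.pi/2))..(Real.pi/2),
        Complex.cos ((x:ℂ)+Complex.I*c)/Complex.sin ((x:ℂ)+Complex.I*c)
          * Complex.exp (-2*Complex.I*k*x))
    = -((if -k = 0 then (-Complex.I*Real.pi) else 0)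
      + (if 1 ≤ -k then -2*Complex.I*Real.pi*((Real.exp (-2*k*c):ℝ):ℂ) else 0)) := by
  have h1 : (∫ x in (-(Real.pi/2))..(Real.pi/2),
      Complex.cos ((x:ℂ)+Complex.I*c)/Complex.sin ((x:ℂ)+Complex.I*c)
        * Complex.exp (-2*Complex.I*k*x))
      = ∫ x in (-(Real.pi/2))..(Real.pi/2),
        -(Complex.cos ((x:ℂ)+Complex.I*((-c : ℝ):ℂ))/Complex.sin ((x:ℂ)+Complex.I*((-c : ℝ):ℂ))
          * Complex.exp (-2*Complex.I*(((-k : ℤ)):ℂ)*x)) := by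
    rw [show (∫ x in (-(Real.pi/2))..(Real.pi/2),
        -(Complex.cos ((x:ℂ)+Complex.I*((-c : ℝ):ℂ))/Complex.sin ((x:ℂ)+Complex.I*((-c : ℝ):ℂ))
          * Complex.exp (-2*Complex.I*(((-k : ℤ)):ℂ)*x)))
      = ∫ x in (-(Real.pi/2))..(Real.pi/2),
        (fun t : ℝ => Complex.cos ((t:ℂ)+Complex.I*c)/Complex.sin ((t:ℂ)+Complex.I*c)
          * Complex.exp (-2*Complex.I*k*t)) (-x) from ?_]
    · rw [intervalIntegral.integral_comp_neg (fun t : ℝ =>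
        Complex.cos ((t:ℂ)+Complex.I*c)/Complex.sin ((t:ℂ)+Complex.I*c)
          * Complex.exp (-2*Complex.I*k*t))]
      norm_num
    · apply intervalIntegral.integral_congr
      intro x _
      simp only
      have e1 : ((-x:ℝ):ℂ) + Complex.I*(c:ℂ) = -((x:ℂ) + Complex.I*((-c:ℝ):ℂ)) := by
        push_cast; ring
      have e2 : (-2:ℂ)*Complex.I*(k:ℂ)*((-x:ℝ):ℂ) = -2*Complex.I*(((-k:ℤ)):ℂ)*(x:ℂ) := by
        push_cast; ring
      rw [e1, e2, Complex.cos_neg, Complex.sin_neg, div_neg]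
      ring
  have h2 := core_pos (show (0:ℝ) < ((-c : ℝ)) by linarith) (-k)
  rw [h1, intervalIntegral.integral_neg, h2]
  norm_num

lemma key {c : ℝ} (hc : c ≠ 0) (k : ℤ) :
    Complex.I * ((1/(Real.pi:ℂ)) * ∫ x in (-(Real.pi/2))..(Real.pi/2),
        Complex.cos ((x:ℂ)+Complex.I*c)/Complex.sin ((x:ℂ)+Complex.I*c)
          * Complex.exp (-2*Complex.I*k*x))
    = ((2 * Real.sign c * heaviside (k*c) * Real.exp (-2*k*c) : ℝ) : ℂ) := by
  have hπ : (Real.pi : ℂ) ≠ 0 := Complex.ofReal_ne_zero.mpr Real.pi_ne_zero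
  rcases hc.lt_or_gt with hneg | hpos
  · rw [core_neg hneg k, Real.sign_of_neg hneg]
    rcases lt_trichotomy k 0 with hk | hk | hk
    · have hkc : 0 < (k:ℝ)*c :=
        mul_pos_of_neg_of_neg (by exact_mod_cast hk) hneg
      rw [if_neg (by omega), if_pos (by omega), heaviside, if_pos hkc]
      push_cast
      field_simp
      ring_nf
      rw [Complex.I_sq]
      ring
    · subst hk
      norm_num [heaviside, Real.exp_zero]
      field_simp
      simp [Complex.I_sq]
    · have hkc : (k:ℝ)*c < 0 :=
        mul_neg_of_pos_of_neg (by exact_mod_cast hk) hneg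
      rw [if_neg (by omega), if_neg (by omega), heaviside, if_neg (by linarith), if_neg (by linarith)]
      push_cast
      ring
  · rw [core_pos hpos k, Real.sign_of_pos hpos]
    rcases lt_trichotomy k 0 with hk | hk | hk
    · have hkc : (k:ℝ)*c < 0 :=
        mul_neg_of_neg_of_pos (by exact_mod_cast hk) hpos
      rw [if_neg (by omega), if_neg (by omega), heaviside, if_neg (by linarith), if_neg (by linarith)]
      push_cast
      ring
    · subst hk
      norm_num [heaviside, Real.exp_zero]
      field_simp
      simp [Complex.I_sq]
    · have hkc : 0 < (k:ℝ)*c :=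
        mul_pos (by exact_mod_cast hk) hpos
      rw [if_neg (by omega), if_pos (by omega), heaviside, if_pos hkc]
      push_cast
      field_simp
      ring_nf
      rw [Complex.I_sq]
      ring



lemma cot_diff (A B E : ℂ) (hA : Complex.sin A ≠ 0) (hB : Complex.sin B ≠ 0) :
    (-Complex.I * Complex.sin (A - B)) / (Complex.sin A * Complex.sin B) * E
      = Complex.I * (Complex.cos A/Complex.sin A * E)
        - Complex.I * (Complex.cos B/Complex.sin B * E) := by
  rw [Complex.sin_sub]
  field_simp
  ring

/-- Fourier coefficients of the shifted kernel `φ'(x+iy, γ)`: for `γ > 0`, `y ≠ ±γ` and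
`k ∈ ℤ`,
`(1/π) ∫_{−π/2}^{π/2} sinh(2γ)/(sin(x+i(γ+y)) sin(x−i(γ−y))) e^{−2ikx} dx
  = Σ_{σ=±1} 2 sign(γ+σy) H(k(y+σγ)) e^{−2k(y+σγ)}`. -/
theorem fourier_coefficient_shifted_kernel
    (γ y : ℝ) (hγ : 0 < γ) (h1 : y ≠ γ) (h2 : y ≠ -γ) (k : ℤ) :
    (1 / (Real.pi : ℂ)) *
        ∫ x in (-(Real.pi / 2))..(Real.pi / 2),
          Complex.sinh (2 * γ) /
              (Complex.sin ((x : ℂ) + Complex.I * ((γ : ℂ) + (y : ℂ))) *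
                Complex.sin ((x : ℂ) - Complex.I * ((γ : ℂ) - (y : ℂ)))) *
            Complex.exp (-2 * Complex.I * k * x)
      = ((2 * Real.sign (γ + y) * heaviside (k * (y + γ)) * Real.exp (-2 * k * (y + γ))
          + 2 * Real.sign (γ - y) * heaviside (k * (y - γ)) * Real.exp (-2 * k * (y - γ)) : ℝ) : ℂ) := by
  have hc₁ : y + γ ≠ 0 := fun h => h2 (by linarith)
  have hc₂ : y - γ ≠ 0 := fun h => h1 (by linarith)
  have pointwise : ∀ x : ℝ,
      Complex.sinh (2 * γ) /
              (Complex.sin ((x : ℂ) + Complex.I * ((γ : ℂ) + (y : ℂ))) *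
                Complex.sin ((x : ℂ) - Complex.I * ((γ : ℂ) - (y : ℂ)))) *
            Complex.exp (-2 * Complex.I * k * x)
      = Complex.I * (Complex.cos ((x:ℂ)+Complex.I*((y+γ:ℝ):ℂ))/Complex.sin ((x:ℂ)+Complex.I*((y+γ:ℝ):ℂ))
            * Complex.exp (-2*Complex.I*k*x))
        - Complex.I * (Complex.cos ((x:ℂ)+Complex.I*((y-γ:ℝ):ℂ))/Complex.sin ((x:ℂ)+Complex.I*((y-γ:ℝ):ℂ))
            * Complex.exp (-2*Complex.I*k*x)) := by
    intro x
    have hA : ((x:ℂ) + Complex.I * ((γ : ℂ) + (y : ℂ))) = (x:ℂ) + Complex.I*((y+γ:ℝ):ℂ) := by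
      push_cast; ring
    have hB : ((x:ℂ) - Complex.I * ((γ : ℂ) - (y : ℂ))) = (x:ℂ) + Complex.I*((y-γ:ℝ):ℂ) := by
      push_cast; ring
    rw [hA, hB]
    have hsA := sin_shift_ne x (y+γ) hc₁
    have hsB := sin_shift_ne x (y-γ) hc₂
    have hsinh : Complex.sinh (2*(γ:ℂ)) = -Complex.I *
        Complex.sin (((x:ℂ) + Complex.I*((y+γ:ℝ):ℂ)) - ((x:ℂ) + Complex.I*((y-γ:ℝ):ℂ))) := by
      rw [show (((x:ℂ) + Complex.I*((y+γ:ℝ):ℂ)) - ((x:ℂ) + Complex.I*((y-γ:ℝ):ℂ)))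
        = (2*(γ:ℂ))*Complex.I by push_cast; ring]
      rw [Complex.sin_mul_I]
      rw [show (-Complex.I * (Complex.sinh (2*(γ:ℂ)) * Complex.I))
        = -(Complex.I*Complex.I) * Complex.sinh (2*(γ:ℂ)) by ring, Complex.I_mul_I]
      ring
    rw [hsinh]
    exact cot_diff _ _ _ hsA hsB
  rw [intervalIntegral.integral_congr (fun x _ => pointwise x)]
  rw [intervalIntegral.integral_sub
    (((cont_cot hc₁ k).intervalIntegrable _ _).const_mul Complex.I)
    (((cont_cot hc₂ k).intervalIntegrable _ _).const_mul Complex.I),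
    intervalIntegral.integral_const_mul, intervalIntegral.integral_const_mul]
  have k1 := key hc₁ k
  have k2 := key hc₂ k
  rw [show Real.sign (γ + y) = Real.sign (y + γ) by rw [add_comm],
    show Real.sign (γ - y) = -Real.sign (y - γ) by rw [show γ-y = -(y-γ) by ring, Real.sign_neg]]
  push_cast at k1 k2 ⊢
  linear_combination k1 - k2
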